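/- Let a : ℕ → ℕ → ℝ be an infinite matrix. Then a ∈ (c : c) if and only if all three of the following hold: (4.2) for each n the series Σ_k |a(n,k)| converges and sup_n Σ_k |a(n,k)| < ∞; (4.3) for each k the limit lim_{n→∞} a(n,k) exists; (4.4) the limit lim_{n→∞} Σ_k a(n,k) exists. -/

import Mathlib

open Filter Topology ZeroAtInfty

noncomputable section KojimaSchur

/-- pointwise bound from convergence -/
lemma bound_of_tendsto' {y : ℕ → ℝ} {L : ℝ} (hy : Filter.Tendsto y Filter.atTop (nhds L)) :
    ∃ B : ℝ, 0 ≤ B ∧ ∀ k, |y k| ≤ B := by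
  obtain ⟨B, hB⟩ := hy.abs.bddAbove_range
  exact ⟨max B 0, le_max_right _ _,
    fun k => le_trans (hB (Set.mem_range_self k)) (le_max_left _ _)⟩

lemma summable_row_mul (b : ℕ → ℝ) (hb : Summable fun k => |b k|) (f : ℕ → ℝ) (B : ℝ)
    (hf : ∀ k, |f k| ≤ B) : Summable fun k => |b k * f k| := by
  refine Summable.of_nonneg_of_le (fun k => abs_nonneg _) (fun k => ?_) (hb.mul_right B)
  rw [abs_mul]; exact mul_le_mul_of_nonneg_left (hf k) (abs_nonneg _)

lemma c0_abs_le (f : C₀(ℕ, ℝ)) (k : ℕ) : |f k| ≤ ‖f‖ := by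
  have h := f.toBCF.norm_coe_le_norm k
  rwa [ZeroAtInftyContinuousMap.norm_toBCF_eq_norm, Real.norm_eq_abs] at h

/-- a finitely supported sequence as an element of `C₀(ℕ, ℝ)` -/
def finSuppC0 (g : ℕ → ℝ) (F : Finset ℕ) : C₀(ℕ, ℝ) where
  toFun k := if k ∈ F then g k else 0
  continuous_toFun := continuous_of_discreteTopology
  zero_at_infty' := by
    rw [cocompact_eq_atTop]
    refine tendsto_const_nhds.congr' ?_
    filter_upwards [eventually_ge_atTop ((F.sup id) + 1)] with k hk
    have hk' : k ∉ F := fun h => by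
      have := Finset.le_sup (f := id) h
      simp only [id] at this
      omega
    simp [hk']

@[simp] lemma finSuppC0_apply (g : ℕ → ℝ) (F : Finset ℕ) (k : ℕ) :
    finSuppC0 g F k = if k ∈ F then g k else 0 := rfl

lemma finSuppC0_norm_le (g : ℕ → ℝ) (F : Finset ℕ) (C : ℝ) (hC : 0 ≤ C)
    (hg : ∀ k, |g k| ≤ C) : ‖finSuppC0 g F‖ ≤ C := by
  rw [← ZeroAtInftyContinuousMap.norm_toBCF_eq_norm]
  refine (BoundedContinuousFunction.norm_le hC).2 fun k => ?_
  have : (finSuppC0 g F).toBCF k = if k ∈ F then g k else 0 := rfl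
  rw [this, Real.norm_eq_abs]
  by_cases hk : k ∈ F
  · simpa [hk] using hg k
  · simpa [hk] using hC

lemma summable_mul_c0 (b : ℕ → ℝ) (hb : Summable fun k => |b k|) (f : C₀(ℕ, ℝ)) :
    Summable fun k => b k * f k :=
  (summable_row_mul b hb (⇑f) ‖f‖ (c0_abs_le f)).of_abs

set_option maxHeartbeats 1000000 in
/-- the row functional on `C₀(ℕ, ℝ)` -/
def rowCLM (b : ℕ → ℝ) (hb : Summable fun k => |b k|) : C₀(ℕ, ℝ) →L[ℝ] ℝ :=
  LinearMap.mkContinuous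
    { toFun := fun f => ∑' k, b k * f k
      map_add' := fun f g => by
        have h1 := summable_mul_c0 b hb f
        have h2 := summable_mul_c0 b hb g
        show (∑' k, b k * (f + g) k) = (∑' k, b k * f k) + (∑' k, b k * g k)
        have : (∑' k, b k * (f + g) k) = ∑' k, (b k * f k + b k * g k) := by
          refine tsum_congr fun k => ?_
          have : (f + g) k = f k + g k := rfl
          rw [this]; ring
        rw [this, Summable.tsum_add h1 h2]
      map_smul' := fun c f => by
        show (∑' k, b k * (c • f) k) = c • (∑' k, b k * f k)
        have : (∑' k, b k * (c • f) k) = ∑' k, c * (b k * f k) := by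
          refine tsum_congr fun k => ?_
          have : (c • f) k = c * f k := rfl
          rw [this]; ring
        rw [this, tsum_mul_left, smul_eq_mul] }
    (∑' k, |b k|)
    (fun f => by
      simp only [LinearMap.coe_mk, AddHom.coe_mk, Real.norm_eq_abs]
      have hsum := summable_row_mul b hb (⇑f) ‖f‖ (c0_abs_le f)
      calc |∑' k, b k * f k| ≤ ∑' k, |b k * f k| := by
            simpa only [Real.norm_eq_abs] using
              norm_tsum_le_tsum_norm (f := fun k => b k * f k) (by simpa only [Real.norm_eq_abs] using hsum)
        _ ≤ ∑' k, |b k| * ‖f‖ := by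
            refine Summable.tsum_le_tsum (fun k => ?_) hsum (hb.mul_right _)
            rw [abs_mul]
            exact mul_le_mul_of_nonneg_left (c0_abs_le f k) (abs_nonneg _)
        _ = (∑' k, |b k|) * ‖f‖ := tsum_mul_right)

lemma tail_le_total (b : ℕ → ℝ) (hb : Summable fun k => |b k|) (M : ℝ)
    (hM : (∑' k, |b k|) ≤ M) (K : ℕ) : (∑' j, |b (j + K)|) ≤ M := by
  have h := Summable.sum_add_tsum_nat_add (f := fun k => |b k|) K hb
  have hr : 0 ≤ ∑ i ∈ Finset.range K, |b i| := Finset.sum_nonneg fun i _ => abs_nonneg _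
  linarith

lemma tail_bound (b : ℕ → ℝ) (hb : Summable fun k => |b k|) (M : ℝ)
    (hM : (∑' k, |b k|) ≤ M) (y : ℕ → ℝ) (K : ℕ) (ε' : ℝ) (hε' : 0 ≤ ε')
    (hK : ∀ k, K ≤ k → |y k| ≤ ε') :
    |∑' j, b (j + K) * y (j + K)| ≤ M * ε' := by
  have hbt : Summable fun j => |b (j + K)| := (summable_nat_add_iff K).2 hb
  have hsum : Summable fun j => |b (j + K) * y (j + K)| :=
    Summable.of_nonneg_of_le (fun j => abs_nonneg _)
      (fun j => by
        rw [abs_mul]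
        exact mul_le_mul_of_nonneg_left (hK _ (Nat.le_add_left K j)) (abs_nonneg _))
      (hbt.mul_right ε')
  calc |∑' j, b (j + K) * y (j + K)| ≤ ∑' j, |b (j + K) * y (j + K)| := by
        simpa only [Real.norm_eq_abs] using
          norm_tsum_le_tsum_norm (f := fun j => b (j + K) * y (j + K))
            (by simpa only [Real.norm_eq_abs] using hsum)
    _ ≤ ∑' j, |b (j + K)| * ε' := by
        refine Summable.tsum_le_tsum (fun j => ?_) hsum (hbt.mul_right ε')
        rw [abs_mul]
        exact mul_le_mul_of_nonneg_left (hK _ (Nat.le_add_left K j)) (abs_nonneg _)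
    _ = (∑' j, |b (j + K)|) * ε' := tsum_mul_right
    _ ≤ M * ε' := mul_le_mul_of_nonneg_right (tail_le_total b hb M hM K) hε'

/-- Core of the reverse direction. -/
lemma key_tendsto (b : ℕ → ℕ → ℝ) (l : ℕ → ℝ) (M : ℝ)
    (hs : ∀ n, Summable fun k => |b n k|)
    (hM : ∀ n, (∑' k, |b n k|) ≤ M)
    (hl : ∀ k, Filter.Tendsto (fun n => b n k) Filter.atTop (nhds (l k)))
    (hls : Summable fun k => |l k|) (hlM : (∑' k, |l k|) ≤ M)
    (y : ℕ → ℝ) (hy : Filter.Tendsto y Filter.atTop (nhds 0)) :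
    Filter.Tendsto (fun n => ∑' k, b n k * y k) Filter.atTop (nhds (∑' k, l k * y k)) := by
  obtain ⟨B, hB0, hB⟩ := bound_of_tendsto' hy
  have hM0 : 0 ≤ M := le_trans (tsum_nonneg fun k => abs_nonneg _) (hM 0)
  have Sb : ∀ n, Summable fun k => b n k * y k :=
    fun n => (summable_row_mul (b n) (hs n) y B hB).of_abs
  have Sl : Summable fun k => l k * y k := (summable_row_mul l hls y B hB).of_abs
  rw [Metric.tendsto_atTop]
  intro ε hε
  set ε' := ε / (4 * (M + 1)) with hε'def
  have hε' : 0 < ε' := by positivity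
  obtain ⟨K, hK⟩ : ∃ K, ∀ k, K ≤ k → |y k| ≤ ε' := by
    obtain ⟨K, hK⟩ := (Metric.tendsto_atTop.1 hy) ε' hε'
    refine ⟨K, fun k hk => ?_⟩
    have := hK k hk
    rw [Real.dist_eq, sub_zero] at this
    exact this.le
  have hfirst : Filter.Tendsto (fun n => ∑ k ∈ Finset.range K, |(b n k - l k) * y k|)
      Filter.atTop (nhds 0) := by
    have hterm : ∀ k ∈ Finset.range K,
        Filter.Tendsto (fun n => |(b n k - l k) * y k|) Filter.atTop (nhds 0) := by
      intro k _
      have h1 : Filter.Tendsto (fun n => (b n k - l k) * y k) Filter.atTop (nhds 0) := by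
        have := ((hl k).sub (tendsto_const_nhds (x := l k))).mul_const (y k)
        simpa using this
      simpa using h1.abs
    have := tendsto_finset_sum (Finset.range K) hterm
    simpa using this
  obtain ⟨N, hN⟩ := (Metric.tendsto_atTop.1 hfirst) (ε / 2) (by positivity)
  refine ⟨N, fun n hn => ?_⟩
  rw [Real.dist_eq]
  have hsplit_b := Summable.sum_add_tsum_nat_add (f := fun k => b n k * y k) K (Sb n)
  have hsplit_l := Summable.sum_add_tsum_nat_add (f := fun k => l k * y k) K Sl
  have tail_b : |∑' j, b n (j + K) * y (j + K)| ≤ M * ε' :=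
    tail_bound (b n) (hs n) M (hM n) y K ε' hε'.le hK
  have tail_l : |∑' j, l (j + K) * y (j + K)| ≤ M * ε' :=
    tail_bound l hls M hlM y K ε' hε'.le hK
  have hfn : ∑ k ∈ Finset.range K, |(b n k - l k) * y k| < ε / 2 := by
    have h := hN n hn
    rw [Real.dist_eq, sub_zero] at h
    have : 0 ≤ ∑ k ∈ Finset.range K, |(b n k - l k) * y k| :=
      Finset.sum_nonneg fun k _ => abs_nonneg _
    rwa [abs_of_nonneg this] at h
  have key_eq : (∑' k, b n k * y k) - (∑' k, l k * y k)
      = (∑ k ∈ Finset.range K, (b n k - l k) * y k)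
        + ((∑' j, b n (j + K) * y (j + K)) - (∑' j, l (j + K) * y (j + K))) := by
    have e1 : ∑ k ∈ Finset.range K, (b n k - l k) * y k
        = (∑ k ∈ Finset.range K, b n k * y k) - ∑ k ∈ Finset.range K, l k * y k := by
      rw [← Finset.sum_sub_distrib]
      exact Finset.sum_congr rfl fun k _ => by ring
    rw [e1]
    linarith [hsplit_b, hsplit_l]
  have hMe : M * ε' ≤ ε / 4 := by
    have h1 : M * ε' ≤ (M + 1) * ε' := by nlinarith [hε'.le]
    have h2 : (M + 1) * ε' = ε / 4 := by
      rw [hε'def]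
      have hne : M + 1 ≠ 0 := by positivity
      field_simp
    linarith
  calc |(∑' k, b n k * y k) - (∑' k, l k * y k)|
      = |(∑ k ∈ Finset.range K, (b n k - l k) * y k)
        + ((∑' j, b n (j + K) * y (j + K)) - (∑' j, l (j + K) * y (j + K)))| := by
        rw [key_eq]
    _ ≤ |∑ k ∈ Finset.range K, (b n k - l k) * y k|
        + |(∑' j, b n (j + K) * y (j + K)) - (∑' j, l (j + K) * y (j + K))| := abs_add_le _ _
    _ ≤ (∑ k ∈ Finset.range K, |(b n k - l k) * y k|)
        + (|∑' j, b n (j + K) * y (j + K)| + |∑' j, l (j + K) * y (j + K)|) := by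
        gcongr
        · exact Finset.abs_sum_le_sum_abs _ _
        · exact abs_sub _ _
    _ < ε / 2 + (M * ε' + M * ε') := by
        have := add_le_add tail_b tail_l
        linarith
    _ ≤ ε / 2 + (ε / 4 + ε / 4) := by linarith
    _ = ε := by ring

end KojimaSchur

/-- The set of null real sequences. -/
def seqC0 : Set (ℕ → ℝ) := {y | Filter.Tendsto y Filter.atTop (nhds 0)}

/-- The set of convergent real sequences. -/
def seqC : Set (ℕ → ℝ) := {y | ∃ l : ℝ, Filter.Tendsto y Filter.atTop (nhds l)}

/-- The set of bounded real sequences. -/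
def seqLinf : Set (ℕ → ℝ) := {y | ∃ M : ℝ, ∀ n, |y n| ≤ M}

/-- The set of absolutely summable real sequences. -/
def seqL1 : Set (ℕ → ℝ) := {y | Summable fun n => |y n|}

/-- `a ∈ (X : Y)`: for every `x ∈ X` the series `Σ_k a(n,k)·x_k` converges
absolutely for each `n`, and the transformed sequence belongs to `Y`. -/
def MatClass (a : ℕ → ℕ → ℝ) (X Y : Set (ℕ → ℝ)) : Prop :=
  ∀ x ∈ X, (∀ n, Summable fun k => |a n k * x k|) ∧ (fun n => ∑' k, a n k * x k) ∈ Y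

/-- `a ∈ (c : c)` iff (4.2) `Σ_k |a(n,k)|` converges for each `n`
with `sup_n Σ_k |a(n,k)| < ∞`, (4.3) `lim_n a(n,k)` exists for each `k`, and
(4.4) `lim_n Σ_k a(n,k)` exists. -/
theorem matclass_c_c (a : ℕ → ℕ → ℝ) :
    MatClass a seqC seqC ↔
      ((∀ n, Summable fun k => |a n k|) ∧ ∃ M : ℝ, ∀ n, (∑' k, |a n k|) ≤ M) ∧
      (∀ k, ∃ l : ℝ, Tendsto (fun n => a n k) atTop (nhds l)) ∧
      (∃ l : ℝ, Tendsto (fun n => ∑' k, a n k) atTop (nhds l)) := by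
  constructor
  · intro h
    -- apply to the constant sequence 1
    have hone : (fun _ : ℕ => (1 : ℝ)) ∈ seqC := ⟨1, tendsto_const_nhds⟩
    obtain ⟨hsum1, hlim1⟩ := h _ hone
    have hs : ∀ n, Summable fun k => |a n k| := fun n => by
      simpa using hsum1 n
    have h44 : ∃ l : ℝ, Tendsto (fun n => ∑' k, a n k) atTop (nhds l) := by
      obtain ⟨l, hl⟩ := hlim1
      exact ⟨l, by simpa [mul_one] using hl⟩
    -- columns
    have h43 : ∀ j, ∃ l : ℝ, Tendsto (fun n => a n j) atTop (nhds l) := by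
      intro j
      have he : (fun k => if k = j then (1 : ℝ) else 0) ∈ seqC := by
        refine ⟨0, ?_⟩
        refine tendsto_const_nhds.congr' ?_
        filter_upwards [eventually_ge_atTop (j + 1)] with k hk
        rw [if_neg (by omega)]
      obtain ⟨-, L, hL⟩ := h _ he
      refine ⟨L, hL.congr fun n => ?_⟩
      rw [tsum_eq_single j (fun k hk => by rw [if_neg hk, mul_zero])]
      rw [if_pos rfl, mul_one]
    -- uniform bound via Banach–Steinhaus
    have hpt : ∀ f : C₀(ℕ, ℝ), ∃ C : ℝ, ∀ n, ‖rowCLM (a n) (hs n) f‖ ≤ C := by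
      intro f
      have hf : (⇑f) ∈ seqC := by
        refine ⟨0, ?_⟩
        have := zero_at_infty f
        rwa [cocompact_eq_atTop] at this
      obtain ⟨-, L, hL⟩ := h _ hf
      obtain ⟨B, -, hB⟩ := bound_of_tendsto' hL
      exact ⟨B, fun n => by
        simpa [rowCLM, Real.norm_eq_abs] using hB n⟩
    obtain ⟨C', hC'⟩ := banach_steinhaus hpt
    refine ⟨⟨hs, C', fun n => ?_⟩, h43, h44⟩
    refine Summable.tsum_le_of_sum_le (hs n) fun F => ?_
    set f : C₀(ℕ, ℝ) := finSuppC0 (fun k => if 0 ≤ a n k then 1 else -1) F with hf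
    have hval : rowCLM (a n) (hs n) f = ∑ k ∈ F, |a n k| := by
      show (∑' k, a n k * f k) = _
      rw [tsum_eq_sum (s := F) (fun k hk => by simp [hf, hk])]
      refine Finset.sum_congr rfl fun k hk => ?_
      rw [hf, finSuppC0_apply, if_pos hk]
      by_cases hak : 0 ≤ a n k
      · rw [if_pos hak, mul_one, abs_of_nonneg hak]
      · rw [if_neg hak, mul_neg_one, abs_of_neg (lt_of_not_ge hak)]
    have hnormf : ‖f‖ ≤ 1 := by
      refine finSuppC0_norm_le _ _ 1 zero_le_one fun k => ?_
      by_cases hak : 0 ≤ a n k <;> simp [hak]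
    have hC'0 : 0 ≤ C' := le_trans (norm_nonneg _) (hC' 0)
    calc ∑ k ∈ F, |a n k| = rowCLM (a n) (hs n) f := hval.symm
      _ ≤ |rowCLM (a n) (hs n) f| := le_abs_self _
      _ = ‖rowCLM (a n) (hs n) f‖ := (Real.norm_eq_abs _).symm
      _ ≤ ‖rowCLM (a n) (hs n)‖ * ‖f‖ := (rowCLM (a n) (hs n)).le_opNorm f
      _ ≤ C' * 1 := mul_le_mul (hC' n) hnormf (norm_nonneg _) hC'0
      _ = C' := mul_one _
  · rintro ⟨⟨hs, M, hM⟩, h3, t, ht⟩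
    choose l hl using h3
    have hM0 : 0 ≤ M := le_trans (tsum_nonneg fun k => abs_nonneg _) (hM 0)
    have hls : Summable fun k => |l k| := by
      refine summable_of_sum_le (c := M) (fun k => abs_nonneg _) fun u => ?_
      have hlim : Tendsto (fun n => ∑ k ∈ u, |a n k|) atTop (nhds (∑ k ∈ u, |l k|)) :=
        tendsto_finset_sum u fun k _ => (hl k).abs
      refine le_of_tendsto hlim (Filter.Eventually.of_forall fun n => ?_)
      exact le_trans (Summable.sum_le_tsum u (fun k _ => abs_nonneg _) (hs n)) (hM n)
    have hlM : (∑' k, |l k|) ≤ M := by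
      refine Summable.tsum_le_of_sum_le hls fun u => ?_
      have hlim : Tendsto (fun n => ∑ k ∈ u, |a n k|) atTop (nhds (∑ k ∈ u, |l k|)) :=
        tendsto_finset_sum u fun k _ => (hl k).abs
      refine le_of_tendsto hlim (Filter.Eventually.of_forall fun n => ?_)
      exact le_trans (Summable.sum_le_tsum u (fun k _ => abs_nonneg _) (hs n)) (hM n)
    rintro x ⟨L, hx⟩
    obtain ⟨B, hB0, hB⟩ := bound_of_tendsto' hx
    constructor
    · exact fun n => summable_row_mul (a n) (hs n) x B hB
    · -- the transformed sequence converges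
      have hy : Tendsto (fun k => x k - L) atTop (nhds 0) := by
        have := hx.sub (tendsto_const_nhds (x := L))
        simpa using this
      have hkey := key_tendsto a l M hs hM hl hls hlM (fun k => x k - L) hy
      refine ⟨(∑' k, l k * (x k - L)) + L * t, ?_⟩
      have hcomb := hkey.add (ht.const_mul L)
      refine hcomb.congr fun n => ?_
      have hyB : ∀ k, |x k - L| ≤ B + |L| := fun k =>
        le_trans (abs_sub _ _) (add_le_add (hB k) le_rfl)
      have S1 : Summable fun k => a n k * (x k - L) :=
        (summable_row_mul (a n) (hs n) _ (B + |L|) hyB).of_abs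
      have S2 : Summable fun k => L * a n k := ((hs n).of_abs.mul_left L)
      have : (∑' k, a n k * (x k - L)) + L * (∑' k, a n k)
          = ∑' k, (a n k * (x k - L) + L * a n k) := by
        rw [Summable.tsum_add S1 S2, tsum_mul_left]
      rw [this]
      exact tsum_congr fun k => by ring
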